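/- For every prime p with p ≡ 3 or 7 (mod 8), there exist primes q and r such that: p < q, q ≡ p (mod 8), gcd(p−1, q−1) = 2, q is a primitive root modulo p², and r is a primitive root modulo p² and modulo q². -/
import Mathlib

/-- `g` is a primitive root modulo `m`: it generates the multiplicative group of `ZMod m`. -/
def IsPrimRootMod (g m : ℕ) : Prop :=
  IsUnit (g : ZMod m) ∧ ∀ x : (ZMod m)ˣ, ∃ i : ℕ, (g : ZMod m) ^ i = (x : ZMod m)

lemma my_isCyclic_units_sq {p : ℕ} (hp : p.Prime) (hodd : p % 2 = 1) :
    IsCyclic (ZMod (p ^ 2))ˣ := by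
  haveI : Fact p.Prime := ⟨hp⟩
  have hp2 : 2 ≤ p := hp.two_le
  haveI : NeZero (p ^ 2) := ⟨by positivity⟩
  have hcard : Fintype.card (ZMod (p ^ 2))ˣ = p * (p - 1) := by
    rw [ZMod.card_units_eq_totient, Nat.totient_prime_pow hp (by norm_num)]
    simp
  have hc2 : ((p : ZMod (p ^ 2))) ^ 2 = 0 := by
    rw [← Nat.cast_pow, ZMod.natCast_self]
  have hxu : IsUnit (((1 + p : ℕ)) : ZMod (p ^ 2)) := by
    rw [ZMod.isUnit_iff_coprime]
    have h1 : Nat.Coprime (1 + p) p := by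
      have := (Nat.coprime_self_add_left.mpr (Nat.coprime_one_left p) : Nat.Coprime (p + 1) p)
      rwa [Nat.add_comm] at this
    exact h1.pow_right 2
  set w : (ZMod (p ^ 2))ˣ := hxu.unit with hw
  have hkey : ((1 : ZMod (p ^ 2)) + p) ^ p = 1 := by
    rw [add_comm, add_pow]
    have hpe : p + 1 = (p - 1) + 1 + 1 := by omega
    rw [hpe, Finset.sum_range_succ', Finset.sum_range_succ']
    have hz : ∀ i ∈ Finset.range (p - 1),
        (p : ZMod (p^2)) ^ (i + 1 + 1) * 1 ^ (p - (i + 1 + 1)) * (p.choose (i + 1 + 1)) = 0 := by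
      intro i _
      rw [pow_add, pow_add]
      rw [show ((p : ZMod (p^2)) ^ i * p ^ 1 * p ^ 1) = p ^ 2 * p ^ i by ring, hc2]
      ring
    rw [Finset.sum_congr rfl hz]
    simp [ZMod.natCast_self, ← sq, hc2]
  have hwp : w ^ p = 1 := by
    ext
    rw [Units.val_pow_eq_pow_val, Units.val_one, hw, IsUnit.unit_spec]
    push_cast
    exact hkey
  have hwne : w ≠ 1 := by
    intro h
    have h0 : ((1 + p : ℕ) : ZMod (p ^ 2)) = 1 := by
      rw [← IsUnit.unit_spec hxu, ← hw, h]; rfl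
    have h2 : ((p : ℕ) : ZMod (p ^ 2)) = 0 := by push_cast at h0 ⊢; linear_combination h0
    rw [ZMod.natCast_eq_zero_iff] at h2
    have := Nat.le_of_dvd (by omega) h2
    nlinarith
  have hworder : orderOf w = p := by
    have hd := orderOf_dvd_of_pow_eq_one hwp
    rcases (Nat.Prime.eq_one_or_self_of_dvd hp _ hd) with h | h
    · exact absurd (orderOf_eq_one_iff.mp h) hwne
    · exact h
  have hsur := ZMod.unitsMap_surjective (m := p ^ 2) (dvd_pow_self p (by norm_num : (2:ℕ) ≠ 0))
  obtain ⟨g₀, hg₀⟩ := IsCyclic.exists_generator (α := (ZMod p)ˣ)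
  obtain ⟨u, hu⟩ := hsur g₀
  have hg₀ord : orderOf g₀ = p - 1 := by
    rw [orderOf_eq_card_of_forall_mem_zpowers hg₀, Nat.card_eq_fintype_card, ZMod.card_units]
  have hdvd1 : p - 1 ∣ orderOf u := by
    rw [← hg₀ord, ← hu]; exact orderOf_map_dvd _ u
  have h1 : p ∣ Monoid.exponent (ZMod (p ^ 2))ˣ := by
    have h0 := Monoid.order_dvd_exponent w
    rwa [hworder] at h0
  have h2 : p - 1 ∣ Monoid.exponent (ZMod (p ^ 2))ˣ :=
    hdvd1.trans (Monoid.order_dvd_exponent u)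
  have hcop : Nat.Coprime p (p - 1) := by
    have h3 : Nat.Coprime (p - 1 + 1) (p - 1) :=
      Nat.coprime_self_add_left.mpr (Nat.coprime_one_left _)
    simpa [show p - 1 + 1 = p by omega] using h3
  have h3 : p * (p - 1) ∣ Monoid.exponent (ZMod (p ^ 2))ˣ :=
    hcop.mul_dvd_of_dvd_of_dvd h1 h2
  have h4 : Monoid.exponent (ZMod (p ^ 2))ˣ ∣ p * (p - 1) :=
    hcard ▸ Group.exponent_dvd_card
  apply IsCyclic.of_exponent_eq_card
  rw [Nat.card_eq_fintype_card, hcard]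
  exact Nat.dvd_antisymm h4 h3

lemma my_exists_primroot {m : ℕ} [NeZero m] (h : IsCyclic (ZMod m)ˣ) :
    ∃ g : ℕ, IsPrimRootMod g m := by
  obtain ⟨ζ, hζ⟩ := h.exists_generator
  refine ⟨(ζ : ZMod m).val, ?_, ?_⟩
  · rw [ZMod.natCast_zmod_val]; exact ζ.isUnit
  · intro x
    obtain ⟨i, hi⟩ := (mem_powers_iff_mem_zpowers).mpr (hζ x)
    refine ⟨i, ?_⟩
    simp only at hi
    rw [ZMod.natCast_zmod_val, ← Units.val_pow_eq_pow_val, hi]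

lemma my_primroot_congr {g q m : ℕ} (h : IsPrimRootMod g m)
    (hq : (q : ZMod m) = (g : ZMod m)) : IsPrimRootMod q m := by
  refine ⟨hq ▸ h.1, fun x => ?_⟩
  obtain ⟨i, hi⟩ := h.2 x
  exact ⟨i, by rw [hq, hi]⟩

lemma my_coprime_of_modEq {a b n : ℕ} (h : a ≡ b [MOD n]) (hb : Nat.Coprime b n) :
    Nat.Coprime a n := by
  unfold Nat.Coprime at *
  rw [Nat.gcd_comm, Nat.gcd_rec] at hb ⊢
  rw [Nat.ModEq] at h
  rw [h]; exact hb

theorem stmt_16 (p : ℕ) (hp : p.Prime) (h8 : p % 8 = 3 ∨ p % 8 = 7) :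
    ∃ q r : ℕ, q.Prime ∧ r.Prime ∧ p < q ∧ q % 8 = p % 8 ∧
      Nat.gcd (p - 1) (q - 1) = 2 ∧
      IsPrimRootMod q (p ^ 2) ∧ IsPrimRootMod r (p ^ 2) ∧ IsPrimRootMod r (q ^ 2) := by
  have hp2 : 2 ≤ p := hp.two_le
  have hodd : p % 2 = 1 := by omega
  have hp3 : 3 ≤ p := by omega
  haveI : Fact p.Prime := ⟨hp⟩
  haveI : NeZero (p ^ 2) := ⟨by positivity⟩
  obtain ⟨g, hg⟩ := my_exists_primroot (my_isCyclic_units_sq hp hodd)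
  set s := (p - 1) / 2 with hs_def
  have hps : p - 1 = 2 * s := by omega
  have hsodd : s % 2 = 1 := by omega
  have hspos : 1 ≤ s := by omega
  have hgcop : Nat.Coprime g (p ^ 2) := (ZMod.isUnit_iff_coprime g (p ^ 2)).mp hg.1
  have hoddp : Odd p := Nat.odd_iff.mpr hodd
  have hcp8 : Nat.Coprime p 8 := by
    have h1 : Nat.Coprime p 2 := Nat.coprime_two_right.mpr hoddp
    simpa using h1.pow_right 3
  have hc2s : Nat.Coprime 2 s := Nat.coprime_two_left.mpr (Nat.odd_iff.mpr hsodd)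
  have hc8s : Nat.Coprime 8 s := by simpa using hc2s.pow_left 3
  have hcps : Nat.Coprime p s := hp.coprime_iff_not_dvd.mpr
    (fun hdvd => absurd (Nat.le_of_dvd hspos hdvd) (by omega))
  have hcp2_8s : Nat.Coprime (p ^ 2) (8 * s) := (hcp8.mul_right hcps).pow_left 2
  obtain ⟨k, hk8, hks⟩ := Nat.chineseRemainder hc8s p 2
  obtain ⟨a, hag, hak⟩ := Nat.chineseRemainder hcp2_8s g k
  have ha8 : a ≡ p [MOD 8] := (Nat.ModEq.of_dvd ⟨s, rfl⟩ hak).trans hk8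
  have has : a ≡ 2 [MOD s] := (Nat.ModEq.of_dvd (dvd_mul_left s 8) hak).trans hks
  set M := p ^ 2 * (8 * s) with hM
  haveI : NeZero M := ⟨by positivity⟩
  have haunit : IsUnit ((a : ℕ) : ZMod M) := by
    rw [ZMod.isUnit_iff_coprime]
    have c1 : Nat.Coprime a (p ^ 2) := my_coprime_of_modEq hag hgcop
    have c2' : Nat.Coprime a 8 := my_coprime_of_modEq ha8 hcp8
    have c3 : Nat.Coprime a s := my_coprime_of_modEq has hc2s
    exact c1.mul_right (c2'.mul_right c3)
  obtain ⟨q, hqgt, hq, hqa⟩ := Nat.forall_exists_prime_gt_and_eq_mod haunit p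
  have key : ∀ d : ℕ, d ∣ M → q ≡ a [MOD d] := by
    intro d hd
    have h0 := congrArg (ZMod.castHom hd (ZMod d)) hqa
    rw [map_natCast, map_natCast] at h0
    exact (ZMod.natCast_eq_natCast_iff _ _ _).mp h0
  have hqp2 : q ≡ g [MOD p ^ 2] := (key (p ^ 2) ⟨8 * s, rfl⟩).trans hag
  have hq8 : q ≡ p [MOD 8] := (key 8 ⟨p ^ 2 * s, by ring⟩).trans ha8
  have hqs : q ≡ 2 [MOD s] := (key s ⟨p ^ 2 * 8, by ring⟩).trans has
  have hq8' : q % 8 = p % 8 := hq8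
  have hqodd : q % 2 = 1 := by omega
  have hq3 : 3 ≤ q := by omega
  -- gcd computation
  have hsd : s ∣ q - 2 := (Nat.modEq_iff_dvd' (by omega : 2 ≤ q)).mp hqs.symm
  have hqe : q - 1 = 2 * ((q - 1) / 2) := by omega
  have hgcd : Nat.gcd (p - 1) (q - 1) = 2 := by
    set t := (q - 1) / 2 with ht
    have h1 : Nat.gcd s t = 1 := by
      have hd1 : Nat.gcd s t ∣ q - 2 := (Nat.gcd_dvd_left s t).trans hsd
      have hd2 : Nat.gcd s t ∣ q - 1 := (Nat.gcd_dvd_right s t).trans ⟨2, by omega⟩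
      have hd3 : Nat.gcd s t ∣ 1 := by
        have h5 := Nat.dvd_sub hd2 hd1
        simpa [show q - 1 - (q - 2) = 1 by omega] using h5
      exact Nat.dvd_one.mp hd3
    rw [hps, hqe, Nat.gcd_mul_left, h1, mul_one]
  have hPq : IsPrimRootMod q (p ^ 2) :=
    my_primroot_congr hg ((ZMod.natCast_eq_natCast_iff _ _ _).mpr hqp2)
  -- construct r
  haveI : NeZero (q ^ 2) := ⟨by positivity⟩
  obtain ⟨g₂, hg₂⟩ := my_exists_primroot (my_isCyclic_units_sq hq hqodd)
  have hcpq : Nat.Coprime (p ^ 2) (q ^ 2) :=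
    ((Nat.coprime_primes hp hq).mpr (Nat.ne_of_lt hqgt)).pow 2 2
  obtain ⟨b, hbg, hbg₂⟩ := Nat.chineseRemainder hcpq g g₂
  haveI : NeZero (p ^ 2 * q ^ 2) := ⟨by positivity⟩
  have hbunit : IsUnit ((b : ℕ) : ZMod (p ^ 2 * q ^ 2)) := by
    rw [ZMod.isUnit_iff_coprime]
    exact (my_coprime_of_modEq hbg hgcop).mul_right
      (my_coprime_of_modEq hbg₂ ((ZMod.isUnit_iff_coprime _ _).mp hg₂.1))
  obtain ⟨r, hrgt, hr, hrb⟩ := Nat.forall_exists_prime_gt_and_eq_mod hbunit 0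
  have keyr : ∀ d : ℕ, d ∣ p ^ 2 * q ^ 2 → r ≡ b [MOD d] := by
    intro d hd
    have h0 := congrArg (ZMod.castHom hd (ZMod d)) hrb
    rw [map_natCast, map_natCast] at h0
    exact (ZMod.natCast_eq_natCast_iff _ _ _).mp h0
  have hPr1 : IsPrimRootMod r (p ^ 2) := my_primroot_congr hg
    ((ZMod.natCast_eq_natCast_iff _ _ _).mpr ((keyr (p ^ 2) (dvd_mul_right _ _)).trans hbg))
  have hPr2 : IsPrimRootMod r (q ^ 2) := my_primroot_congr hg₂
    ((ZMod.natCast_eq_natCast_iff _ _ _).mpr ((keyr (q ^ 2) (dvd_mul_left _ _)).trans hbg₂))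
  exact ⟨q, r, hq, hr, hqgt, hq8', hgcd, hPq, hPr1, hPr2⟩
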